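/- For every integer d ≥ 1 there is a constant c_d > 0 such that every finite hypergraph on a nonempty vertex set with VC-dimension at most d admits, for every ε ∈ (0,1), an ε-net of size at most c_d/ε^d. -/

import Mathlib

open scoped Classical

/-- `A` is shattered by the hyperedge family `E`. -/
def Shatters {V : Type*} [DecidableEq V] (E : Finset (Finset V)) (A : Finset V) : Prop :=
  ∀ B ⊆ A, ∃ e ∈ E, A ∩ e = B

lemma shatters_mono {V : Type*} [DecidableEq V] {E F : Finset (Finset V)} (h : F ⊆ E)
    {A : Finset V} (hA : _root_.Shatters F A) : _root_.Shatters E A := by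
  intro B hB
  obtain ⟨e, he, heq⟩ := hA B hB
  exact ⟨e, h he, heq⟩

open scoped Classical in
/-- The VC-dimension-1 ε-net lemma, proved by the minimal-set greedy argument. -/
lemma net_dim1 {V : Type} [Fintype V] [DecidableEq V] (ε : ℝ) (hε : 0 < ε)
    (hn : (0:ℝ) < Fintype.card V) :
    ∀ F : Finset (Finset V), ∀ U : Finset V,
      (∀ A : Finset V, _root_.Shatters F A → A.card ≤ 1) →
      (∀ C ∈ F, C ⊆ U) →
      (∀ C ∈ F, ε * (Fintype.card V : ℝ) ≤ (C.card : ℝ)) →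
      ∃ N : Finset V, (∀ C ∈ F, (N ∩ C).Nonempty) ∧
        (N.card : ℝ) ≤ 2 + (U.card : ℝ) / (ε * Fintype.card V) := by
  intro F
  induction F using Finset.strongInduction with
  | _ F ih =>
    intro U hVC hsub hsize
    have hεn : (0:ℝ) < ε * Fintype.card V := mul_pos hε hn
    rcases F.eq_empty_or_nonempty with rfl | hne
    · refine ⟨∅, by simp, ?_⟩
      have : (0:ℝ) ≤ (U.card : ℝ) / (ε * Fintype.card V) := by positivity
      simp; linarith
    -- minimal (by card, hence by inclusion) member M
    obtain ⟨M, hMF, hMmin⟩ := F.exists_min_image Finset.card hne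
    have hMU : M ⊆ U := hsub M hMF
    have hMcard : ε * (Fintype.card V : ℝ) ≤ (M.card : ℝ) := hsize M hMF
    have hMne : M.Nonempty := by
      rw [← Finset.card_pos]
      have : (0:ℝ) < M.card := lt_of_lt_of_le hεn hMcard
      exact_mod_cast this
    -- reach sets and the maximal element p
    set reach : V → Finset V := fun a => M.filter (fun b => ∀ C ∈ F, a ∈ C → b ∈ C) with hreach
    obtain ⟨p, hpM, hpmin⟩ := M.exists_min_image (fun a => (reach a).card) hMne
    by_cases hp : ∀ C ∈ F, (C ∩ M).Nonempty → p ∈ C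
    · -- recurse
      set F' : Finset (Finset V) := F.filter (fun C => C ∩ M = ∅) with hF'
      have hss : F' ⊂ F := by
        refine Finset.ssubset_iff_of_subset (Finset.filter_subset _ _) |>.2 ⟨M, hMF, ?_⟩
        simp only [hF', Finset.mem_filter, not_and]
        intro _
        rw [Finset.inter_self]
        exact fun h => hMne.ne_empty h
      obtain ⟨N, hNhit, hNcard⟩ := ih F' hss (U \ M)
        (fun A hA => hVC A (shatters_mono (Finset.filter_subset _ _) hA))
        (by
          intro C hC
          rw [hF', Finset.mem_filter] at hC
          refine Finset.subset_sdiff.2 ⟨hsub C hC.1, ?_⟩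
          rw [Finset.disjoint_iff_inter_eq_empty, hC.2])
        (fun C hC => hsize C (Finset.filter_subset _ _ hC))
      refine ⟨insert p N, ?_, ?_⟩
      · intro C hC
        by_cases hCM : C ∩ M = ∅
        · obtain ⟨x, hx⟩ := hNhit C (by rw [hF', Finset.mem_filter]; exact ⟨hC, hCM⟩)
          rw [Finset.mem_inter] at hx
          exact ⟨x, Finset.mem_inter.2 ⟨Finset.mem_insert_of_mem hx.1, hx.2⟩⟩
        · have : p ∈ C := hp C hC (Finset.nonempty_iff_ne_empty.2 hCM)
          exact ⟨p, Finset.mem_inter.2 ⟨Finset.mem_insert_self _ _, this⟩⟩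
      · have h1 : ((insert p N).card : ℝ) ≤ (N.card : ℝ) + 1 := by
          exact_mod_cast Finset.card_insert_le _ _
        have h2 : ((U \ M).card : ℝ) = (U.card : ℝ) - (M.card : ℝ) := by
          rw [Finset.card_sdiff_of_subset hMU]
          have := Finset.card_le_card hMU
          push_cast [this]
          ring
        have h3 : ((U \ M).card : ℝ) / (ε * Fintype.card V)
            ≤ (U.card : ℝ) / (ε * Fintype.card V) - 1 := by
          rw [h2]
          rw [div_le_iff₀ hεn]
          rw [sub_mul, div_mul_cancel₀ _ (ne_of_gt hεn)]
          linarith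
        linarith
    · -- found C₀ crossing M missing p; produce a global 2-point net
      push_neg at hp
      obtain ⟨C₀, hC₀F, hC₀M, hpC₀⟩ := hp
      obtain ⟨c, hc⟩ := hC₀M
      rw [Finset.mem_inter] at hc
      obtain ⟨hcC₀, hcM⟩ := hc
      -- claim: there is W ∈ F with p ∈ W, c ∉ W
      have hW : ∃ W ∈ F, p ∈ W ∧ c ∉ W := by
        by_contra hcon
        push_neg at hcon
        -- then Rel p c, so reach c ⊆ reach p, and by minimality of p they are equal
        have hrelpc : ∀ C ∈ F, p ∈ C → c ∈ C := by
          intro C hCF hpC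
          by_contra hcC
          exact hcC (hcon C hCF hpC)
        have hsubr : reach c ⊆ reach p := by
          intro b hb
          rw [hreach, Finset.mem_filter] at hb ⊢
          refine ⟨hb.1, fun C hCF hpC => hb.2 C hCF (hrelpc C hCF hpC)⟩
        have hcard : (reach p).card ≤ (reach c).card := hpmin c hcM
        have heq : reach c = reach p := Finset.eq_of_subset_of_card_le hsubr hcard
        have hpreachp : p ∈ reach p := by
          rw [hreach, Finset.mem_filter]
          exact ⟨hpM, fun C _ h => h⟩
        rw [← heq, hreach, Finset.mem_filter] at hpreachp
        exact hpC₀ (hpreachp.2 C₀ hC₀F hcC₀)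
      obtain ⟨W, hWF, hpW, hcW⟩ := hW
      have hpc : p ≠ c := fun h => hpC₀ (h ▸ hcC₀)
      -- claim: every D ∈ F meets {p, c}
      have hmeet : ∀ D ∈ F, (({p, c} : Finset V) ∩ D).Nonempty := by
        intro D hDF
        by_contra hcon
        rw [Finset.not_nonempty_iff_eq_empty, ← Finset.disjoint_iff_inter_eq_empty] at hcon
        have hpD : p ∉ D := Finset.disjoint_left.1 hcon (by simp)
        have hcD : c ∉ D := Finset.disjoint_left.1 hcon (by simp)
        -- {p, c} is shattered by F
        have hshat : _root_.Shatters F {p, c} := by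
          intro B hB
          by_cases hpB : p ∈ B <;> by_cases hcB : c ∈ B
          · have : B = {p, c} := Finset.Subset.antisymm hB
              (Finset.insert_subset hpB (Finset.singleton_subset_iff.2 hcB))
            refine ⟨M, hMF, ?_⟩
            rw [this, Finset.inter_eq_left]
            exact Finset.insert_subset hpM (Finset.singleton_subset_iff.2 hcM)
          · have : B = {p} := by
              apply Finset.Subset.antisymm
              · intro x hx
                rcases Finset.mem_insert.1 (hB hx) with h | h
                · simp [h]
                · rw [Finset.mem_singleton] at h; exact absurd (h ▸ hx) hcB
              · simp [hpB]
            refine ⟨W, hWF, ?_⟩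
            rw [this]
            ext x
            simp only [Finset.mem_inter, Finset.mem_insert, Finset.mem_singleton]
            constructor
            · rintro ⟨h1 | h1, h2⟩
              · exact h1
              · exact absurd (h1 ▸ h2) hcW
            · rintro rfl; exact ⟨Or.inl rfl, hpW⟩
          · have : B = {c} := by
              apply Finset.Subset.antisymm
              · intro x hx
                rcases Finset.mem_insert.1 (hB hx) with h | h
                · exact absurd (h ▸ hx) hpB
                · exact h
              · simp [hcB]
            refine ⟨C₀, hC₀F, ?_⟩
            rw [this]
            ext x
            simp only [Finset.mem_inter, Finset.mem_insert, Finset.mem_singleton]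
            constructor
            · rintro ⟨h1 | h1, h2⟩
              · exact absurd (h1 ▸ h2) hpC₀
              · exact h1
            · rintro rfl; exact ⟨Or.inr rfl, hcC₀⟩
          · have : B = ∅ := by
              rw [Finset.eq_empty_iff_forall_notMem]
              intro x hx
              rcases Finset.mem_insert.1 (hB hx) with h | h
              · exact hpB (h ▸ hx)
              · rw [Finset.mem_singleton] at h; exact hcB (h ▸ hx)
            refine ⟨D, hDF, ?_⟩
            rw [this, Finset.eq_empty_iff_forall_notMem]
            intro x hx
            rw [Finset.mem_inter] at hx
            rcases Finset.mem_insert.1 hx.1 with h | h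
            · exact hpD (h ▸ hx.2)
            · rw [Finset.mem_singleton] at h; exact hcD (h ▸ hx.2)
        have := hVC _ hshat
        rw [Finset.card_insert_of_notMem (by simp [hpc]), Finset.card_singleton] at this
        omega
      refine ⟨{p, c}, hmeet, ?_⟩
      have hcard2 : (({p, c} : Finset V).card : ℝ) ≤ 2 := by
        have := Finset.card_insert_le p ({c} : Finset V)
        have h2 : ({p, c} : Finset V).card ≤ 2 := by simpa using this
        exact_mod_cast h2
      have : (0:ℝ) ≤ (U.card : ℝ) / (ε * Fintype.card V) := by positivity
      linarith

variable {V : Type} [Fintype V] [DecidableEq V]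

lemma count_coord (ι : Type) [Fintype ι] [DecidableEq ι] (i : ι) (A : Finset V) :
    (Finset.univ.filter fun y : ι → V => y i ∈ A).card
      = A.card * (Fintype.card V) ^ (Fintype.card ι - 1) := by
  have e : {y : ι → V // y i ∈ A} ≃ A × ({j : ι // j ≠ i} → V) :=
    { toFun := fun y => (⟨y.1 i, y.2⟩, fun j => y.1 j.1)
      invFun := fun x => ⟨fun j => if h : j = i then x.1.1 else x.2 ⟨j, h⟩, by simp⟩
      left_inv := by
        rintro ⟨y, hy⟩
        ext j
        by_cases h : j = i
        · subst h; simp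
        · simp [h]
      right_inv := by
        rintro ⟨a, g⟩
        refine Prod.ext ?_ ?_
        · simp
        · funext j
          simp [j.2] }
  have h1 : (Finset.univ.filter fun y : ι → V => y i ∈ A).card
      = Fintype.card {y : ι → V // y i ∈ A} := (Fintype.card_subtype _).symm
  rw [h1, Fintype.card_congr e, Fintype.card_prod, Fintype.card_coe, Fintype.card_fun]
  congr 2
  rw [Fintype.card_subtype_compl, Fintype.card_subtype_eq]


private lemma aux_markov1 (ε M S : ℝ) (hε0 : 0 < ε) (hε1 : ε ≤ 1)
    (hS0 : 0 ≤ S) (hS : S ≤ ε * M / 2) : M * (1 - ε) ≤ (1 - ε/2) * (M - S + 1) := by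
  nlinarith [mul_nonneg hS0 hε0.le]

private lemma aux_markov2 (ε M S : ℝ) (hε0 : 0 < ε) (hε1 : ε ≤ 1) (hM : 0 ≤ M)
    (hS0 : 0 ≤ S) (hS : S ≤ ε * M / 2) : 0 < M - S + 1 := by
  nlinarith

/-- Markov/first-moment lemma: most tuples hit a large set at least `s` times. -/
lemma markov_count (ι : Type) [Fintype ι] [DecidableEq ι] (e : Finset V) (s m : ℕ)
    (hcard : Fintype.card ι = m)
    (ε : ℝ) (hε0 : 0 < ε) (hε1 : ε ≤ 1)
    (hn : 1 ≤ Fintype.card V)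
    (hw : ε * (Fintype.card V : ℝ) ≤ (e.card : ℝ))
    (hm : 1 ≤ m)
    (hs : (s : ℝ) ≤ ε * (m : ℝ) / 2) :
    (ε / 2) * (Fintype.card V : ℝ) ^ m
      ≤ ((Finset.univ.filter fun y : ι → V =>
          s ≤ (Finset.univ.filter fun i => y i ∈ e).card).card : ℝ) := by
  have hmm : m = Fintype.card ι := hcard.symm
  set n := Fintype.card V with hnn
  set w := e.card with hww
  clear_value n w
  have hwn : w ≤ n := by
    rw [hww, hnn]
    simpa using Finset.card_le_univ e
  -- total count
  have htot : ((Finset.univ : Finset (ι → V))).card = n ^ m := by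
    rw [Finset.card_univ, Fintype.card_fun, ← hnn, ← hmm]
  -- split into good and bad
  set good := (Finset.univ.filter fun y : ι → V =>
      s ≤ (Finset.univ.filter fun i => y i ∈ e).card) with hgood
  set bad := (Finset.univ.filter fun y : ι → V =>
      ¬ s ≤ (Finset.univ.filter fun i => y i ∈ e).card) with hbad
  clear_value good bad
  have hsplit : good.card + bad.card = n ^ m := by
    rw [hgood, hbad, Finset.card_filter_add_card_filter_not, htot]
  -- each bad y has many misses
  have hsm : s ≤ m := by
    have h0 : (s : ℝ) ≤ (m : ℝ) := by nlinarith [Nat.cast_nonneg (α := ℝ) m]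
    exact_mod_cast h0
  have hbad_miss : ∀ y ∈ bad, m - s + 1 ≤ (Finset.univ.filter fun i => y i ∉ e).card := by
    intro y hy
    rw [hbad, Finset.mem_filter] at hy
    have hcnt := hy.2
    have hsum : (Finset.univ.filter fun i => y i ∈ e).card
        + (Finset.univ.filter fun i => y i ∉ e).card = m := by
      rw [Finset.card_filter_add_card_filter_not, Finset.card_univ, ← hmm]
    omega
  -- the sum of misses
  have hmiss_sum : ∑ y : ι → V, (Finset.univ.filter fun i => y i ∉ e).card
      = m * ((n - w) * n ^ (m - 1)) := by
    have h1 : ∀ y : ι → V, (Finset.univ.filter fun i => y i ∉ e).card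
        = ∑ i : ι, if y i ∉ e then 1 else 0 := by
      intro y; rw [Finset.card_filter]
    simp_rw [h1]
    rw [Finset.sum_comm]
    have h2 : ∀ i : ι, ∑ y : ι → V, (if y i ∉ e then 1 else 0)
        = (n - w) * n ^ (m - 1) := by
      intro i
      rw [← Finset.card_filter]
      have h3 : (Finset.univ.filter fun y : ι → V => y i ∉ e)
          = (Finset.univ.filter fun y : ι → V => y i ∈ Finset.univ \ e) := by
        apply Finset.filter_congr
        intro y _
        simp
      rw [h3, count_coord ι i (Finset.univ \ e), Finset.card_sdiff_of_subset (Finset.subset_univ e),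
        Finset.card_univ, ← hnn, ← hmm, ← hww]
    simp_rw [h2]
    rw [Finset.sum_const, Finset.card_univ, smul_eq_mul, ← hmm]
  -- Markov inequality
  have hmarkov : (m - s + 1) * bad.card ≤ m * ((n - w) * n ^ (m - 1)) := by
    rw [← hmiss_sum]
    calc (m - s + 1) * bad.card = ∑ _y ∈ bad, (m - s + 1) := by
          rw [Finset.sum_const, smul_eq_mul, mul_comm]
      _ ≤ ∑ y ∈ bad, (Finset.univ.filter fun i => y i ∉ e).card :=
          Finset.sum_le_sum hbad_miss
      _ ≤ ∑ y : ι → V, (Finset.univ.filter fun i => y i ∉ e).card :=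
          Finset.sum_le_sum_of_subset (Finset.subset_univ bad)
  -- cast to ℝ and conclude
  have hnm1 : (n : ℝ) ^ m = (n : ℝ) * (n : ℝ) ^ (m - 1) := by
    conv_lhs => rw [show m = (m - 1) + 1 from (Nat.succ_pred_eq_of_pos hm).symm]
    ring
  have hC : ((m - s + 1 : ℕ) : ℝ) = (m : ℝ) - s + 1 := by push_cast [hsm]; ring
  have hNW : ((n - w : ℕ) : ℝ) = (n : ℝ) - w := by push_cast [hwn]; ring
  have hmarkovR : ((m : ℝ) - s + 1) * bad.card ≤ m * (((n:ℝ) - w) * (n:ℝ) ^ (m - 1)) := by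
    rw [← hC, ← hNW]
    exact_mod_cast hmarkov
  have hnpos : (0:ℝ) < (n : ℝ) := by exact_mod_cast hn
  have hnp1 : (0:ℝ) ≤ (n : ℝ) ^ (m - 1) := by positivity
  have hkey : (m:ℝ) * (((n:ℝ) - w) * (n:ℝ) ^ (m - 1))
      ≤ (1 - ε/2) * (((m:ℝ) - s + 1) * (n:ℝ) ^ m) := by
    have h1 : (n:ℝ) - w ≤ (1 - ε) * n := by linarith
    have h2 : (m:ℝ) * (1 - ε) ≤ (1 - ε/2) * ((m:ℝ) - s + 1) :=
      aux_markov1 ε m s hε0 hε1 (Nat.cast_nonneg s) hs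
    calc (m:ℝ) * (((n:ℝ) - w) * (n:ℝ) ^ (m - 1))
        ≤ (m:ℝ) * ((1 - ε) * n * (n:ℝ) ^ (m - 1)) := by
          apply mul_le_mul_of_nonneg_left _ (Nat.cast_nonneg m)
          apply mul_le_mul_of_nonneg_right h1 hnp1
      _ = ((m:ℝ) * (1 - ε)) * ((n:ℝ) * (n:ℝ) ^ (m - 1)) := by ring
      _ ≤ ((1 - ε/2) * ((m:ℝ) - s + 1)) * ((n:ℝ) * (n:ℝ) ^ (m - 1)) := by
          apply mul_le_mul_of_nonneg_right h2
          positivity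
      _ = (1 - ε/2) * (((m:ℝ) - s + 1) * (n:ℝ) ^ m) := by rw [hnm1]; ring
  have hms1 : (0:ℝ) < (m:ℝ) - s + 1 :=
    aux_markov2 ε m s hε0 hε1 (Nat.cast_nonneg m) (Nat.cast_nonneg s) hs
  have hbadR : (bad.card : ℝ) ≤ (1 - ε/2) * (n:ℝ) ^ m := by
    have h4 : ((m:ℝ) - s + 1) * bad.card ≤ ((m:ℝ) - s + 1) * ((1 - ε/2) * (n:ℝ) ^ m) := by
      rw [show ((m:ℝ) - s + 1) * ((1 - ε/2) * (n:ℝ) ^ m)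
          = (1 - ε/2) * (((m:ℝ) - s + 1) * (n:ℝ) ^ m) from by ring]
      exact le_trans hmarkovR hkey
    exact le_of_mul_le_mul_left h4 hms1
  have hgoodR : (good.card : ℝ) = (n:ℝ) ^ m - bad.card := by
    have : (good.card : ℝ) + bad.card = (n:ℝ) ^ m := by exact_mod_cast hsplit
    linarith
  rw [hgoodR]
  linarith

/-- Lower bound for the number of "bad configurations" for a fixed split `S`. -/
lemma lower_per_split (L : Finset (Finset V)) (k s : ℕ) (hk : 1 ≤ k)
    (ε : ℝ) (hε0 : 0 < ε) (hε1 : ε ≤ 1) (hn : 1 ≤ Fintype.card V)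
    (hsize : ∀ e ∈ L, ε * (Fintype.card V : ℝ) ≤ (e.card : ℝ))
    (hs : (s : ℝ) ≤ ε * (k : ℝ) / 2)
    (hno : ∀ z : Fin k → V, ∃ e ∈ L, ∀ i, z i ∉ e)
    (S : Finset (Fin (2 * k))) (hS : S.card = k) :
    (ε / 2) * (Fintype.card V : ℝ) ^ k * (Fintype.card V : ℝ) ^ k
      ≤ ((Finset.univ.filter fun z : Fin (2 * k) → V =>
          ∃ e ∈ L, (∀ i ∈ S, z i ∉ e)
            ∧ s ≤ (Finset.univ.filter fun i => z i ∈ e).card).card : ℝ) := by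
  set n := Fintype.card V with hnn
  -- subtype cardinalities
  have cardX : Fintype.card {i : Fin (2 * k) // i ∈ S} = k := by
    rw [Fintype.card_coe, hS]
  have cardY : Fintype.card {i : Fin (2 * k) // ¬ i ∈ S} = k := by
    rw [Fintype.card_subtype_compl, Fintype.card_fin]
    rw [Fintype.card_coe, hS]
    omega
  -- witness function
  have hwit : ∀ x : {i : Fin (2 * k) // i ∈ S} → V,
      ∃ e ∈ L, ∀ i : {i : Fin (2 * k) // i ∈ S}, x i ∉ e := by
    intro x
    have g : Fin k ≃ {i : Fin (2 * k) // i ∈ S} :=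
      (Fintype.equivFinOfCardEq cardX).symm
    obtain ⟨e, heL, hmiss⟩ := hno (fun j => x (g j))
    refine ⟨e, heL, fun i => ?_⟩
    have := hmiss (g.symm i)
    simpa using this
  choose w hwL hwmiss using hwit
  set Φ := Equiv.piEquivPiSubtypeProd (fun i : Fin (2 * k) => i ∈ S) (fun _ => V) with hΦ
  set Q : (Fin (2 * k) → V) → Prop := fun z =>
    ∃ e ∈ L, (∀ i ∈ S, z i ∉ e) ∧ s ≤ (Finset.univ.filter fun i => z i ∈ e).card with hQ
  set R : ({i : Fin (2 * k) // i ∈ S} → V) → ({i : Fin (2 * k) // ¬ i ∈ S} → V) → Prop :=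
    fun x y => s ≤ (Finset.univ.filter fun j : {i : Fin (2 * k) // ¬ i ∈ S} => y j ∈ w x).card
    with hR
  -- the injection
  have hinj : ∃ f : (Σ x : {i : Fin (2 * k) // i ∈ S} → V, {y // R x y}) → {z // Q z},
      Function.Injective f := by
    refine ⟨fun a => ⟨Φ.symm (a.1, a.2.1), ?_⟩, ?_⟩
    · obtain ⟨x, y, hy⟩ := a
      refine ⟨w x, hwL x, ?_, ?_⟩
      · intro i hi
        have hz : Φ.symm (x, y) i = x ⟨i, hi⟩ := by
          simp [hΦ, Equiv.piEquivPiSubtypeProd, hi]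
        rw [hz]
        exact hwmiss x ⟨i, hi⟩
      · refine le_trans hy ?_
        apply Finset.card_le_card_of_injOn (fun j => j.1)
        · intro j hj
          rw [Finset.mem_coe, Finset.mem_filter] at hj ⊢
          refine ⟨Finset.mem_univ _, ?_⟩
          show Φ.symm (x, y) j.1 ∈ w x
          have hz : Φ.symm (x, y) j.1 = y j := by
            simp [hΦ, Equiv.piEquivPiSubtypeProd, j.2]
          rw [hz]
          exact hj.2
        · intro a _ b _ hab
          exact Subtype.ext hab
    · rintro ⟨xa, ⟨ya, hya⟩⟩ ⟨xb, ⟨yb, hyb⟩⟩ hab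
      simp only [Subtype.mk.injEq] at hab
      have h0 := Φ.symm.injective hab
      rw [Prod.mk.injEq] at h0
      obtain ⟨h1, h2⟩ := h0
      subst h1
      have h3 : ya = yb := h2
      subst h3
      rfl
  obtain ⟨f, hf⟩ := hinj
  have hcard_le : Fintype.card (Σ x : {i : Fin (2 * k) // i ∈ S} → V, {y // R x y})
      ≤ Fintype.card {z // Q z} := Fintype.card_le_of_injective f hf
  -- per-fiber lower bound
  have hfiber : ∀ x : {i : Fin (2 * k) // i ∈ S} → V,
      (ε / 2) * (n : ℝ) ^ k ≤ (Fintype.card {y // R x y} : ℝ) := by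
    intro x
    have h1 := markov_count (V := V) {i : Fin (2 * k) // ¬ i ∈ S} (w x) s k cardY ε hε0 hε1
      (by rw [← hnn]; exact hn) (hsize _ (hwL x)) hk hs
    rw [← hnn] at h1
    have h2 : Fintype.card {y // R x y}
        = (Finset.univ.filter fun y : {i : Fin (2 * k) // ¬ i ∈ S} → V =>
            s ≤ (Finset.univ.filter fun j => y j ∈ w x).card).card :=
      Fintype.card_subtype _
    rw [h2]
    exact h1
  -- sum up
  have hsigma : (Fintype.card (Σ x : {i : Fin (2 * k) // i ∈ S} → V, {y // R x y}) : ℝ)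
      = ∑ x : {i : Fin (2 * k) // i ∈ S} → V, (Fintype.card {y // R x y} : ℝ) := by
    rw [Fintype.card_sigma]
    push_cast
    rfl
  have hsum_lb : (ε / 2) * (n : ℝ) ^ k * (n : ℝ) ^ k
      ≤ (Fintype.card (Σ x : {i : Fin (2 * k) // i ∈ S} → V, {y // R x y}) : ℝ) := by
    rw [hsigma]
    have := Finset.sum_le_sum (s := (Finset.univ : Finset ({i : Fin (2 * k) // i ∈ S} → V)))
      (f := fun _x : {i : Fin (2 * k) // i ∈ S} → V => (ε / 2) * (n : ℝ) ^ k)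
      (g := fun x => (Fintype.card {y // R x y} : ℝ))
      (fun x _ => hfiber x)
    rw [Finset.sum_const, Finset.card_univ, Fintype.card_fun, cardX, nsmul_eq_mul] at this
    calc (ε / 2) * (n : ℝ) ^ k * (n : ℝ) ^ k
        = ((n : ℝ) ^ k) * ((ε / 2) * (n : ℝ) ^ k) := by ring
      _ = (((n ^ k : ℕ) : ℝ)) * ((ε / 2) * (n : ℝ) ^ k) := by push_cast; ring
      _ ≤ _ := this
  have hfinal : Fintype.card {z // Q z}
      = (Finset.univ.filter fun z : Fin (2 * k) → V => Q z).card := Fintype.card_subtype _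
  have : (ε / 2) * (n : ℝ) ^ k * (n : ℝ) ^ k ≤ (Fintype.card {z // Q z} : ℝ) := by
    refine le_trans hsum_lb ?_
    exact_mod_cast hcard_le
  rw [hfinal] at this
  exact this

/-- Transfer of the VC bound to position sets. -/
lemma shatters_transfer (d : ℕ) (E : Finset (Finset V))
    (hVC : ∀ A : Finset V, _root_.Shatters E A → A.card ≤ d)
    (k' : ℕ) (z : Fin k' → V) (G : Finset (Finset (Fin k')))
    (hG : ∀ Q ∈ G, ∃ e ∈ E, Q = Finset.univ.filter (fun i => z i ∈ e)) :
    ∀ A : Finset (Fin k'), G.Shatters A → A.card ≤ d := by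
  intro A hA
  have hinj : Set.InjOn z A := by
    intro i hi j hj hij
    by_contra hne
    obtain ⟨Q, hQG, hAQ⟩ := hA (Finset.erase_subset j A)
    obtain ⟨e, _heE, rfl⟩ := hG Q hQG
    have hiA : i ∈ A.erase j := Finset.mem_erase.2 ⟨hne, hi⟩
    rw [← hAQ] at hiA
    have hzi : z i ∈ e := (Finset.mem_filter.1 (Finset.mem_inter.1 hiA).2).2
    have hjQ : j ∈ A ∩ (Finset.univ.filter (fun i => z i ∈ e)) :=
      Finset.mem_inter.2 ⟨hj, Finset.mem_filter.2 ⟨Finset.mem_univ _, hij ▸ hzi⟩⟩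
    rw [hAQ] at hjQ
    exact (Finset.mem_erase.1 hjQ).1 rfl
  have hcard : (A.image z).card = A.card := Finset.card_image_of_injOn hinj
  have hshat : _root_.Shatters E (A.image z) := by
    intro B' hB'
    have hBA : A.filter (fun i => z i ∈ B') ⊆ A := Finset.filter_subset _ _
    obtain ⟨Q, hQG, hAQ⟩ := hA hBA
    obtain ⟨e, heE, rfl⟩ := hG Q hQG
    refine ⟨e, heE, ?_⟩
    ext v
    simp only [Finset.mem_inter, Finset.mem_image]
    constructor
    · rintro ⟨⟨i, hiA, rfl⟩, hve⟩
      have hiQ : i ∈ A ∩ (Finset.univ.filter (fun i => z i ∈ e)) :=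
        Finset.mem_inter.2 ⟨hiA, Finset.mem_filter.2 ⟨Finset.mem_univ _, hve⟩⟩
      rw [hAQ] at hiQ
      exact (Finset.mem_filter.1 hiQ).2
    · intro hvB'
      obtain ⟨i, hiA, rfl⟩ := Finset.mem_image.1 (hB' hvB')
      have hiB : i ∈ A.filter (fun i => z i ∈ B') :=
        Finset.mem_filter.2 ⟨hiA, hvB'⟩
      rw [← hAQ] at hiB
      exact ⟨⟨i, hiA, rfl⟩, (Finset.mem_filter.1 (Finset.mem_inter.1 hiB).2).2⟩
  have := hVC _ hshat
  omega

/-- Upper bound on the number of splits that are bad for a fixed `z`. -/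
lemma upper_per_z (d k s : ℕ) (hsk : s ≤ k) (E L : Finset (Finset V)) (hLE : L ⊆ E)
    (hVC : ∀ A : Finset V, _root_.Shatters E A → A.card ≤ d)
    (z : Fin (2 * k) → V) :
    ((Finset.powersetCard k (Finset.univ : Finset (Fin (2 * k)))).filter
        (fun S => ∃ e ∈ L, (∀ i ∈ S, z i ∉ e)
          ∧ s ≤ (Finset.univ.filter fun i => z i ∈ e).card)).card
      ≤ (∑ i ∈ Finset.Iic d, (2 * k).choose i) * (2 * k - s).choose k := by
  set G : Finset (Finset (Fin (2 * k))) :=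
    (L.filter (fun e => s ≤ (Finset.univ.filter fun i => z i ∈ e).card)).image
      (fun e => Finset.univ.filter fun i => z i ∈ e) with hGdef
  have hGprop : ∀ Q ∈ G, ∃ e ∈ E, Q = Finset.univ.filter (fun i => z i ∈ e) := by
    intro Q hQ
    rw [hGdef, Finset.mem_image] at hQ
    obtain ⟨e, he, rfl⟩ := hQ
    exact ⟨e, hLE (Finset.mem_filter.1 he).1, rfl⟩
  have hGcard_big : ∀ Q ∈ G, s ≤ Q.card := by
    intro Q hQ
    rw [hGdef, Finset.mem_image] at hQ
    obtain ⟨e, he, rfl⟩ := hQ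
    exact (Finset.mem_filter.1 he).2
  -- Sauer–Shelah
  have hvc : G.vcDim ≤ d := by
    apply Finset.sup_le
    intro A hA
    exact shatters_transfer d E hVC (2 * k) z G hGprop A (Finset.mem_shatterer.1 hA)
  have hGle : G.card ≤ ∑ i ∈ Finset.Iic d, (2 * k).choose i := by
    calc G.card ≤ G.shatterer.card := Finset.card_le_card_shatterer G
      _ ≤ ∑ i ∈ Finset.Iic G.vcDim, (Fintype.card (Fin (2 * k))).choose i :=
          Finset.card_shatterer_le_sum_vcDim
      _ ≤ ∑ i ∈ Finset.Iic d, (Fintype.card (Fin (2 * k))).choose i := by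
          apply Finset.sum_le_sum_of_subset
          exact Finset.Iic_subset_Iic.2 hvc
      _ = ∑ i ∈ Finset.Iic d, (2 * k).choose i := by rw [Fintype.card_fin]
  -- the subset relation
  have hsubset : ((Finset.powersetCard k (Finset.univ : Finset (Fin (2 * k)))).filter
        (fun S => ∃ e ∈ L, (∀ i ∈ S, z i ∉ e)
          ∧ s ≤ (Finset.univ.filter fun i => z i ∈ e).card))
      ⊆ G.biUnion (fun Q => (Finset.powersetCard k
          (Finset.univ : Finset (Fin (2 * k)))).filter (fun S => ∀ i ∈ S, i ∉ Q)) := by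
    intro S hS
    rw [Finset.mem_filter] at hS
    obtain ⟨hSmem, e, heL, hmiss, hcnt⟩ := hS
    refine Finset.mem_biUnion.2 ⟨Finset.univ.filter fun i => z i ∈ e, ?_, ?_⟩
    · rw [hGdef]
      exact Finset.mem_image_of_mem _ (Finset.mem_filter.2 ⟨heL, hcnt⟩)
    · refine Finset.mem_filter.2 ⟨hSmem, ?_⟩
      intro i hiS hiQ
      exact hmiss i hiS (Finset.mem_filter.1 hiQ).2
  calc ((Finset.powersetCard k (Finset.univ : Finset (Fin (2 * k)))).filter _).card
      ≤ (G.biUnion (fun Q => (Finset.powersetCard k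
          (Finset.univ : Finset (Fin (2 * k)))).filter (fun S => ∀ i ∈ S, i ∉ Q))).card :=
        Finset.card_le_card hsubset
    _ ≤ ∑ Q ∈ G, ((Finset.powersetCard k
          (Finset.univ : Finset (Fin (2 * k)))).filter (fun S => ∀ i ∈ S, i ∉ Q)).card :=
        Finset.card_biUnion_le
    _ ≤ ∑ _Q ∈ G, (2 * k - s).choose k := by
        apply Finset.sum_le_sum
        intro Q hQ
        have h1 : ((Finset.powersetCard k (Finset.univ : Finset (Fin (2 * k)))).filter
            (fun S => ∀ i ∈ S, i ∉ Q))
            ⊆ Finset.powersetCard k (Finset.univ \ Q) := by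
          intro S hS
          rw [Finset.mem_filter, Finset.mem_powersetCard] at hS
          obtain ⟨⟨_hsub, hcard⟩, hdisj⟩ := hS
          rw [Finset.mem_powersetCard]
          refine ⟨?_, hcard⟩
          intro i hiS
          rw [Finset.mem_sdiff]
          exact ⟨Finset.mem_univ _, hdisj i hiS⟩
        calc ((Finset.powersetCard k (Finset.univ : Finset (Fin (2 * k)))).filter
              (fun S => ∀ i ∈ S, i ∉ Q)).card
            ≤ (Finset.powersetCard k (Finset.univ \ Q)).card := Finset.card_le_card h1
          _ = ((Finset.univ \ Q).card).choose k := Finset.card_powersetCard _ _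
          _ ≤ (2 * k - s).choose k := by
              apply Nat.choose_le_choose
              rw [Finset.card_sdiff_of_subset (Finset.subset_univ Q)]
              have := hGcard_big Q hQ
              have h2 : (Finset.univ : Finset (Fin (2 * k))).card = 2 * k := by
                rw [Finset.card_univ, Fintype.card_fin]
              omega
    _ = G.card * (2 * k - s).choose k := by rw [Finset.sum_const, smul_eq_mul]
    _ ≤ (∑ i ∈ Finset.Iic d, (2 * k).choose i) * (2 * k - s).choose k :=
        Nat.mul_le_mul_right _ hGle

/-- `128 r² + 1 ≤ 2^(16r)` for `r ≥ 1`. -/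
lemma aux_pow16 : ∀ r : ℕ, 1 ≤ r → 128 * r ^ 2 + 1 ≤ 2 ^ (16 * r) := by
  intro r hr
  induction r, hr using Nat.le_induction with
  | base => norm_num
  | succ r hr ih =>
    have h1 : 2 ^ (16 * (r + 1)) = 2 ^ (16 * r) * 2 ^ 16 := by
      rw [← pow_add]; ring_nf
    rw [h1]
    have h2 : 128 * (r + 1) ^ 2 + 1 ≤ (128 * r ^ 2 + 1) * 2 ^ 16 := by nlinarith
    calc 128 * (r + 1) ^ 2 + 1 ≤ (128 * r ^ 2 + 1) * 2 ^ 16 := h2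
      _ ≤ 2 ^ (16 * r) * 2 ^ 16 := Nat.mul_le_mul_right _ ih

/-- Doubling property of binomial coefficients. -/
lemma aux_choose_doubling (k : ℕ) (hk : 1 ≤ k) :
    ∀ s : ℕ, s ≤ k → 2 ^ s * (2 * k - s).choose k ≤ (2 * k).choose k := by
  intro s
  induction s with
  | zero => intro _; simp
  | succ s ih =>
    intro hs
    have hs' : s ≤ k := by omega
    have key : 2 * ((2 * k - (s + 1)).choose k) ≤ (2 * k - s).choose k := by
      set m := 2 * k - s with hm
      have hmk : k + 1 ≤ m := by omega
      have hm1 : 2 * k - (s + 1) = m - 1 := by omega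
      rw [hm1]
      -- Pascal: C(m, k) = C(m-1, k-1) + C(m-1, k)
      have hpascal : m.choose k = (m - 1).choose (k - 1) + (m - 1).choose k := by
        conv_lhs => rw [show m = (m - 1) + 1 from by omega, show k = (k - 1) + 1 from by omega]
        rw [Nat.choose_succ_succ]
        congr 2
        omega
      -- C(m-1, k) ≤ C(m-1, k-1) since m ≤ 2k
      have hle : (m - 1).choose k ≤ (m - 1).choose (k - 1) := by
        have hid : (m - 1).choose ((k - 1) + 1) * ((k - 1) + 1)
            = (m - 1).choose (k - 1) * ((m - 1) - (k - 1)) := Nat.choose_succ_right_eq _ _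
        rw [show (k - 1) + 1 = k from by omega] at hid
        have hmk2 : (m - 1) - (k - 1) ≤ k := by omega
        have := hid.le.trans (Nat.mul_le_mul_left _ hmk2)
        exact Nat.le_of_mul_le_mul_right this (by omega)
      omega
    calc 2 ^ (s + 1) * (2 * k - (s + 1)).choose k
        = 2 ^ s * (2 * ((2 * k - (s + 1)).choose k)) := by ring
      _ ≤ 2 ^ s * (2 * k - s).choose k := Nat.mul_le_mul_left _ key
      _ ≤ (2 * k).choose k := ih hs'

/-- `∑_{i ≤ d} C(m, i) ≤ (m+1)^d`. -/
lemma aux_sum_choose (m : ℕ) : ∀ d : ℕ, ∑ i ∈ Finset.Iic d, m.choose i ≤ (m + 1) ^ d := by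
  have hIic : ∀ d : ℕ, (Finset.Iic d : Finset ℕ) = Finset.range (d + 1) := by
    intro d; ext x; simp [Nat.lt_succ_iff]
  intro d
  rw [hIic]
  induction d with
  | zero => simp
  | succ d ih =>
    rw [Finset.sum_range_succ]
    have h1 : m.choose (d + 1) ≤ m ^ (d + 1) := Nat.choose_le_pow _ _
    have h2 : (m + 1) ^ (d + 1) = (m + 1) ^ d + m * (m + 1) ^ d := by ring
    have h3 : m ^ (d + 1) ≤ m * (m + 1) ^ d := by
      rw [pow_succ']
      exact Nat.mul_le_mul_left _ (Nat.pow_le_pow_left (by omega) _)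
    omega

/-- The key numeric inequality. -/
lemma aux_bignum (d t : ℕ) (hd : 1 ≤ d) (ht : 1 ≤ t) :
    2 * t * (2 * (64 * d ^ 2 * t ^ 2) + 1) ^ d < 2 ^ (32 * d ^ 2 * t) := by
  have h1 : 2 * (64 * d ^ 2 * t ^ 2) + 1 = 128 * (d * t) ^ 2 + 1 := by ring
  have h2 : 128 * (d * t) ^ 2 + 1 ≤ 2 ^ (16 * (d * t)) :=
    aux_pow16 (d * t) (by nlinarith)
  have h3 : (2 * (64 * d ^ 2 * t ^ 2) + 1) ^ d ≤ 2 ^ (16 * (d * t) * d) := by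
    rw [h1, pow_mul]
    exact Nat.pow_le_pow_left h2 d
  have h4 : 2 * t < 2 ^ (t + 1) := by
    have := Nat.lt_two_pow_self (n := t)
    calc 2 * t < 2 * 2 ^ t := by omega
      _ = 2 ^ (t + 1) := by ring
  have h5 : 2 * t * (2 * (64 * d ^ 2 * t ^ 2) + 1) ^ d
      < 2 ^ (t + 1) * 2 ^ (16 * (d * t) * d) := by
    have hb : 0 < 2 ^ (16 * (d * t) * d) := Nat.pow_pos (by omega)
    calc 2 * t * (2 * (64 * d ^ 2 * t ^ 2) + 1) ^ d
        ≤ 2 * t * 2 ^ (16 * (d * t) * d) := Nat.mul_le_mul_left _ h3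
      _ < 2 ^ (t + 1) * 2 ^ (16 * (d * t) * d) := by
          apply Nat.mul_lt_mul_of_lt_of_le h4 (le_refl _) hb
  have h6 : 2 ^ (t + 1) * 2 ^ (16 * (d * t) * d) = 2 ^ (t + 1 + 16 * (d * t) * d) := by
    rw [← pow_add]
  have h7 : t + 1 + 16 * (d * t) * d ≤ 32 * d ^ 2 * t := by
    have hd2 : 1 ≤ d ^ 2 := Nat.one_le_pow _ _ (by omega)
    have he1 : 16 * (d * t) * d = 16 * (d ^ 2 * t) := by ring
    have he0 : 32 * d ^ 2 * t = 32 * (d ^ 2 * t) := by ring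
    have hu : t ≤ d ^ 2 * t := by
      calc t = 1 * t := by ring
        _ ≤ d ^ 2 * t := Nat.mul_le_mul_right t hd2
    rw [he1, he0]
    omega
  calc 2 * t * (2 * (64 * d ^ 2 * t ^ 2) + 1) ^ d
      < 2 ^ (t + 1 + 16 * (d * t) * d) := by rw [← h6]; exact h5
    _ ≤ 2 ^ (32 * d ^ 2 * t) := Nat.pow_le_pow_right (by omega) h7

/-- Core counting argument: a sufficiently long random tuple is a net. -/
lemma exists_net_tuple [Nonempty V]
    (d t : ℕ) (hd : 1 ≤ d) (ht : 1 ≤ t)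
    (E L : Finset (Finset V)) (hLE : L ⊆ E)
    (hVC : ∀ A : Finset V, _root_.Shatters E A → A.card ≤ d)
    (ε : ℝ) (hε0 : 0 < ε) (hε1 : ε ≤ 1) (hεt : 1 ≤ ε * t)
    (hsize : ∀ e ∈ L, ε * (Fintype.card V : ℝ) ≤ (e.card : ℝ)) :
    ∃ z : Fin (64 * d ^ 2 * t ^ 2) → V, ∀ e ∈ L, ∃ i, z i ∈ e := by
  set n := Fintype.card V with hnn
  set k := 64 * d ^ 2 * t ^ 2 with hk
  set s := 32 * d ^ 2 * t with hsdef
  have hn1 : 1 ≤ n := by rw [hnn]; exact Fintype.card_pos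
  have hd2 : 1 ≤ d ^ 2 := Nat.one_le_pow _ _ (by omega)
  have ht2 : 1 ≤ t ^ 2 := Nat.one_le_pow _ _ (by omega)
  have hk1 : 1 ≤ k := by
    have h0 : 1 * 1 ≤ d ^ 2 * t ^ 2 := Nat.mul_le_mul hd2 ht2
    have h1 : k = 64 * (d ^ 2 * t ^ 2) := by rw [hk]; ring
    omega
  have hsk : s ≤ k := by
    have e1 : s = 32 * (d ^ 2 * t) * 1 := by rw [hsdef]; ring
    have e2 : k = 32 * (d ^ 2 * t) * (2 * t) := by rw [hk]; ring
    rw [e1, e2]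
    exact Nat.mul_le_mul_left _ (by omega)
  have ht0 : (0:ℝ) < t := by exact_mod_cast ht
  have hs_real : (s : ℝ) ≤ ε * (k : ℝ) / 2 := by
    have key : (32 * (d:ℝ) ^ 2 * t) * 1 ≤ (32 * (d:ℝ) ^ 2 * t) * (ε * t) :=
      mul_le_mul_of_nonneg_left hεt (by positivity)
    have e3 : ε * ((64 * (d:ℝ) ^ 2 * t ^ 2)) / 2 = (32 * (d:ℝ) ^ 2 * t) * (ε * t) := by ring
    rw [hsdef, hk]
    push_cast
    rw [e3]
    linarith
  by_contra hcon
  push_neg at hcon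
  -- hcon : ∀ z : Fin k → V, ∃ e ∈ L, ∀ i, z i ∉ e
  -- the common predicate
  set P : Finset (Fin (2 * k)) → (Fin (2 * k) → V) → Prop := fun S z =>
    ∃ e ∈ L, (∀ i ∈ S, z i ∉ e) ∧ s ≤ (Finset.univ.filter fun i => z i ∈ e).card with hP
  -- lower bound on the double count
  have hlow : (((2 * k).choose k : ℝ)) * ((ε / 2) * (n:ℝ) ^ k * (n:ℝ) ^ k)
      ≤ ∑ S ∈ Finset.powersetCard k (Finset.univ : Finset (Fin (2 * k))),
          (((Finset.univ.filter fun z : Fin (2 * k) → V => P S z).card : ℝ)) := by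
    have hcardP : (Finset.powersetCard k (Finset.univ : Finset (Fin (2 * k)))).card
        = (2 * k).choose k := by
      rw [Finset.card_powersetCard, Finset.card_univ, Fintype.card_fin]
    have := Finset.sum_le_sum
      (s := Finset.powersetCard k (Finset.univ : Finset (Fin (2 * k))))
      (f := fun _S => (ε / 2) * (n:ℝ) ^ k * (n:ℝ) ^ k)
      (g := fun S => (((Finset.univ.filter fun z : Fin (2 * k) → V => P S z).card : ℝ)))
      (fun S hS => lower_per_split L k s hk1 ε hε0 hε1 hn1 hsize hs_real hcon S
        (Finset.mem_powersetCard.1 hS).2)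
    rw [Finset.sum_const, hcardP, nsmul_eq_mul] at this
    exact this
  -- swap the double count
  have hswap : ∑ S ∈ Finset.powersetCard k (Finset.univ : Finset (Fin (2 * k))),
        (Finset.univ.filter fun z : Fin (2 * k) → V => P S z).card
      = ∑ z : Fin (2 * k) → V,
          ((Finset.powersetCard k (Finset.univ : Finset (Fin (2 * k)))).filter
            (fun S => P S z)).card := by
    simp_rw [Finset.card_filter]
    exact Finset.sum_comm
  -- upper bound
  have hup : ∑ z : Fin (2 * k) → V,
        ((Finset.powersetCard k (Finset.univ : Finset (Fin (2 * k)))).filter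
          (fun S => P S z)).card
      ≤ n ^ (2 * k) * ((∑ i ∈ Finset.Iic d, (2 * k).choose i) * (2 * k - s).choose k) := by
    have := Finset.sum_le_sum
      (s := (Finset.univ : Finset (Fin (2 * k) → V)))
      (f := fun z => ((Finset.powersetCard k (Finset.univ : Finset (Fin (2 * k)))).filter
          (fun S => P S z)).card)
      (g := fun _z => (∑ i ∈ Finset.Iic d, (2 * k).choose i) * (2 * k - s).choose k)
      (fun z _ => upper_per_z d k s hsk E L hLE hVC z)
    rw [Finset.sum_const, Finset.card_univ, Fintype.card_fun, Fintype.card_fin,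
      smul_eq_mul, ← hnn] at this
    exact this
  -- combine
  set Φ := ∑ i ∈ Finset.Iic d, (2 * k).choose i with hΦdef
  set C' := (2 * k - s).choose k with hC'def
  have hcast : (((∑ S ∈ Finset.powersetCard k (Finset.univ : Finset (Fin (2 * k))),
      (Finset.univ.filter fun z : Fin (2 * k) → V => P S z).card) : ℕ) : ℝ)
      = ∑ S ∈ Finset.powersetCard k (Finset.univ : Finset (Fin (2 * k))),
          (((Finset.univ.filter fun z : Fin (2 * k) → V => P S z).card : ℝ)) := by
    push_cast; rfl
  have hreal : (((2 * k).choose k : ℝ)) * ((ε / 2) * (n:ℝ) ^ k * (n:ℝ) ^ k)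
      ≤ (n:ℝ) ^ (2 * k) * ((Φ : ℝ) * (C' : ℝ)) := by
    calc (((2 * k).choose k : ℝ)) * ((ε / 2) * (n:ℝ) ^ k * (n:ℝ) ^ k)
        ≤ ∑ S ∈ Finset.powersetCard k (Finset.univ : Finset (Fin (2 * k))),
            (((Finset.univ.filter fun z : Fin (2 * k) → V => P S z).card : ℝ)) := hlow
      _ = (((∑ S ∈ Finset.powersetCard k (Finset.univ : Finset (Fin (2 * k))),
            (Finset.univ.filter fun z : Fin (2 * k) → V => P S z).card) : ℕ) : ℝ) :=
          hcast.symm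
      _ ≤ ((n ^ (2 * k) * (Φ * C') : ℕ) : ℝ) := by
          rw [hswap]
          exact_mod_cast hup
      _ = (n:ℝ) ^ (2 * k) * ((Φ : ℝ) * (C' : ℝ)) := by push_cast; ring
  -- divide by n^(2k)
  have hnk2 : (n:ℝ) ^ k * (n:ℝ) ^ k = (n:ℝ) ^ (2 * k) := by
    rw [← pow_add]; congr 1; ring
  have hnpow : (0:ℝ) < (n:ℝ) ^ (2 * k) := by
    have : (0:ℝ) < (n:ℝ) := by exact_mod_cast hn1
    positivity
  have hdiv : (ε / 2) * (((2 * k).choose k : ℝ)) ≤ (Φ : ℝ) * (C' : ℝ) := by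
    have h1 : ((ε / 2) * (((2 * k).choose k : ℝ))) * ((n:ℝ) ^ (2 * k))
        ≤ ((Φ : ℝ) * (C' : ℝ)) * ((n:ℝ) ^ (2 * k)) := by
      calc ((ε / 2) * (((2 * k).choose k : ℝ))) * ((n:ℝ) ^ (2 * k))
          = (((2 * k).choose k : ℝ)) * ((ε / 2) * (n:ℝ) ^ k * (n:ℝ) ^ k) := by
            rw [← hnk2]; ring
        _ ≤ (n:ℝ) ^ (2 * k) * ((Φ : ℝ) * (C' : ℝ)) := hreal
        _ = ((Φ : ℝ) * (C' : ℝ)) * ((n:ℝ) ^ (2 * k)) := by ring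
    exact le_of_mul_le_mul_right h1 hnpow
  -- multiply by 2t
  have hA0 : (0:ℝ) ≤ (((2 * k).choose k : ℝ)) := Nat.cast_nonneg _
  have hfinalR : (((2 * k).choose k : ℝ)) ≤ (2 * t : ℝ) * ((Φ : ℝ) * (C' : ℝ)) := by
    calc (((2 * k).choose k : ℝ)) = (((2 * k).choose k : ℝ)) * 1 := by ring
      _ ≤ (((2 * k).choose k : ℝ)) * (ε * t) := mul_le_mul_of_nonneg_left hεt hA0
      _ = (2 * t : ℝ) * ((ε / 2) * (((2 * k).choose k : ℝ))) := by ring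
      _ ≤ (2 * t : ℝ) * ((Φ : ℝ) * (C' : ℝ)) := by
          apply mul_le_mul_of_nonneg_left hdiv (by positivity)
  have hfinalN : (2 * k).choose k ≤ 2 * t * (Φ * C') := by exact_mod_cast hfinalR
  -- Nat contradiction
  have hΦle : Φ ≤ (2 * k + 1) ^ d := aux_sum_choose (2 * k) d
  have hC'pos : 0 < C' := by
    rw [hC'def]
    exact Nat.choose_pos (by omega)
  have hstep1 : 2 * t * (Φ * C') ≤ (2 * t * (2 * k + 1) ^ d) * C' := by
    calc 2 * t * (Φ * C') = (2 * t * Φ) * C' := by ring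
      _ ≤ (2 * t * (2 * k + 1) ^ d) * C' :=
          Nat.mul_le_mul_right _ (Nat.mul_le_mul_left _ hΦle)
  have hstep2 : (2 * t * (2 * k + 1) ^ d) * C' < 2 ^ s * C' := by
    apply Nat.mul_lt_mul_of_lt_of_le _ (le_refl C') hC'pos
    have := aux_bignum d t hd ht
    rw [hk, hsdef]
    exact this
  have hstep3 : 2 ^ s * C' ≤ (2 * k).choose k := aux_choose_doubling k hk1 s hsk
  omega

theorem explicit_eps_net_bound (d : ℕ) (hd : 1 ≤ d) :
    ∃ c : ℝ, 0 < c ∧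
      ∀ (V : Type) (_ : Fintype V) (_ : DecidableEq V) (_ : Nonempty V)
        (E : Finset (Finset V)),
        (∀ A : Finset V, Shatters E A → A.card ≤ d) →
        ∀ ε : ℝ, ε ∈ Set.Ioo (0 : ℝ) 1 →
          ∃ N : Finset V,
            (∀ e ∈ E, ε * (Fintype.card V : ℝ) ≤ (e.card : ℝ) → (N ∩ e).Nonempty) ∧
            (N.card : ℝ) ≤ c / ε ^ d := by
  refine ⟨256 * (d:ℝ) ^ 2 + 4, by positivity, ?_⟩
  intro V instF instD instN E hVC ε hε
  obtain ⟨hε0, hε1⟩ := hε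
  have hn0 : (0:ℝ) < (Fintype.card V : ℝ) := by
    have := Fintype.card_pos (α := V)
    exact_mod_cast this
  set L := E.filter (fun e => ε * (Fintype.card V : ℝ) ≤ (e.card : ℝ)) with hLdef
  have hLsize : ∀ e ∈ L, ε * (Fintype.card V : ℝ) ≤ (e.card : ℝ) :=
    fun e he => (Finset.mem_filter.1 he).2
  have hLE : L ⊆ E := Finset.filter_subset _ _
  have hVCL : ∀ A : Finset V, Shatters L A → A.card ≤ d :=
    fun A hA => hVC A (shatters_mono hLE hA)
  have hεd : (0:ℝ) < ε ^ d := pow_pos hε0 d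
  rcases eq_or_lt_of_le hd with hd1 | hd2
  · -- case d = 1
    obtain rfl : d = 1 := hd1.symm
    have hVC1 : ∀ A : Finset V, Shatters L A → A.card ≤ 1 := hVCL
    obtain ⟨N, hNhit, hNcard⟩ := net_dim1 ε hε0 hn0 L Finset.univ hVC1
      (fun C _ => Finset.subset_univ C) hLsize
    refine ⟨N, ?_, ?_⟩
    · intro e heE hesize
      exact hNhit e (Finset.mem_filter.2 ⟨heE, hesize⟩)
    · have hcard_univ : ((Finset.univ : Finset V).card : ℝ) = (Fintype.card V : ℝ) := by
        rw [Finset.card_univ]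
      rw [hcard_univ] at hNcard
      have hdiv : (Fintype.card V : ℝ) / (ε * Fintype.card V) = 1 / ε := by
        field_simp
      rw [hdiv] at hNcard
      rw [pow_one, le_div_iff₀ hε0]
      have h1 : (N.card : ℝ) * ε ≤ (2 + 1/ε) * ε :=
        mul_le_mul_of_nonneg_right hNcard hε0.le
      have h2 : (2 + 1/ε) * ε = 2 * ε + 1 := by field_simp
      nlinarith
  · -- case d ≥ 2
    have hd2' : 2 ≤ d := hd2
    set t := ⌈1/ε⌉₊ with htdef
    have ht1 : 1 ≤ t := by
      rw [htdef]
      rw [Nat.one_le_ceil_iff]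
      positivity
    have htle : 1/ε ≤ (t : ℝ) := Nat.le_ceil _
    have hεt : 1 ≤ ε * t := by
      have := mul_le_mul_of_nonneg_left htle hε0.le
      rw [mul_one_div, div_self (ne_of_gt hε0)] at this
      exact this
    have htub : (t : ℝ) < 2/ε := by
      have h1 : (t : ℝ) < 1/ε + 1 := Nat.ceil_lt_add_one (by positivity)
      have h2 : (1:ℝ) ≤ 1/ε := by
        rw [le_div_iff₀ hε0]
        linarith
      have : 2/ε = 1/ε + 1/ε := by ring
      rw [this]
      linarith
    obtain ⟨z, hz⟩ := exists_net_tuple d t hd ht1 E L hLE hVC ε hε0 hε1.le hεt hLsize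
    refine ⟨Finset.image z Finset.univ, ?_, ?_⟩
    · intro e heE hesize
      obtain ⟨i, hi⟩ := hz e (Finset.mem_filter.2 ⟨heE, hesize⟩)
      exact ⟨z i, Finset.mem_inter.2
        ⟨Finset.mem_image_of_mem z (Finset.mem_univ i), hi⟩⟩
    · have hcard1 : (Finset.image z Finset.univ).card ≤ 64 * d ^ 2 * t ^ 2 := by
        calc (Finset.image z Finset.univ).card ≤ (Finset.univ : Finset (Fin (64 * d ^ 2 * t ^ 2))).card :=
              Finset.card_image_le
          _ = 64 * d ^ 2 * t ^ 2 := by rw [Finset.card_univ, Fintype.card_fin]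
      have hcardR : ((Finset.image z Finset.univ).card : ℝ) ≤ 64 * (d:ℝ) ^ 2 * (t:ℝ) ^ 2 := by
        exact_mod_cast hcard1
      have ht0 : (0:ℝ) ≤ (t : ℝ) := Nat.cast_nonneg _
      have ht2 : (t:ℝ) ^ 2 ≤ (2/ε) ^ 2 := by
        apply pow_le_pow_left₀ ht0 htub.le
      have hb1 : 64 * (d:ℝ) ^ 2 * (t:ℝ) ^ 2 ≤ 64 * (d:ℝ) ^ 2 * (4 / ε ^ 2) := by
        apply mul_le_mul_of_nonneg_left _ (by positivity)
        calc (t:ℝ) ^ 2 ≤ (2/ε) ^ 2 := ht2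
          _ = 4 / ε ^ 2 := by rw [div_pow]; norm_num
      have hb2 : 64 * (d:ℝ) ^ 2 * (4 / ε ^ 2) = 256 * (d:ℝ) ^ 2 / ε ^ 2 := by ring
      have hεd2 : ε ^ d ≤ ε ^ 2 := pow_le_pow_of_le_one hε0.le hε1.le hd2'
      have hb3 : 256 * (d:ℝ) ^ 2 / ε ^ 2 ≤ (256 * (d:ℝ) ^ 2 + 4) / ε ^ d := by
        apply div_le_div₀ (by positivity) (by linarith) hεd hεd2
      calc ((Finset.image z Finset.univ).card : ℝ)
          ≤ 64 * (d:ℝ) ^ 2 * (t:ℝ) ^ 2 := hcardR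
        _ ≤ 64 * (d:ℝ) ^ 2 * (4 / ε ^ 2) := hb1
        _ = 256 * (d:ℝ) ^ 2 / ε ^ 2 := hb2
        _ ≤ (256 * (d:ℝ) ^ 2 + 4) / ε ^ d := hb3
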